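/- Path compression preserves the anti-symmetry (acyclicity) invariant: let X be a finite type, f : X → X with ≤f antisymmetric, x rx : X with x <f rx (x ≤f rx and x ≠ rx). Then ≤g is also antisymmetric where g = Function.update f x rx. -/
import Mathlib


def lef {X : Type*} (f : X → X) (n m : X) : Prop :=
  Relation.ReflTransGen (fun a b => b = f a) n m

theorem stmt_10 {X : Type*} [Fintype X] [DecidableEq X] (f : X → X)
    (antisym : ∀ n m : X, lef f n m → lef f m n → n = m)
    (x rx : X)
    (hlt : lef f x rx ∧ x ≠ rx) :
    ∀ n m : X, lef (Function.update f x rx) n m →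
      lef (Function.update f x rx) m n → n = m := by
  have key : ∀ n m : X, lef (Function.update f x rx) n m → lef f n m := by
    intro n m h
    induction h with
    | refl => exact Relation.ReflTransGen.refl
    | tail _ h2 ih =>
      subst h2
      refine ih.trans ?_
      rename_i b _
      by_cases hb : b = x
      · subst hb
        rw [Function.update_self]
        exact hlt.1
      · rw [Function.update_of_ne hb]
        exact Relation.ReflTransGen.single rfl
  intro n m h1 h2
  exact antisym n m (key n m h1) (key m n h2)
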